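/- Let M be a positively ordered monoid. Then: (i) if M is unperforated (n·a ≤ n·b for some n ≥ 1 implies a ≤ b), then M is nearly unperforated; (ii) if M is nearly unperforated, then M is almost unperforated; (iii) if M is nearly unperforated, then M is weakly separative, i.e., 2·a ≤ a + b ≤ 2·b implies a ≤ b. -/

import Mathlib

/-- A positively ordered monoid is nearly unperforated if `a ≤ b` whenever
`k•a ≤ k•b` for all sufficiently large `k`. -/
def NearlyUnperforated (M : Type*) [AddCommMonoid M] [PartialOrder M] [IsOrderedAddMonoid M] : Prop :=
  ∀ a b : M, (∃ k₀ : ℕ, ∀ k : ℕ, k₀ ≤ k → k • a ≤ k • b) → a ≤ b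

/-- A positively ordered monoid is almost unperforated if `(k+1)•a ≤ k•b` for
some `k` implies `a ≤ b`. -/
def AlmostUnperforated (M : Type*) [AddCommMonoid M] [PartialOrder M] [IsOrderedAddMonoid M] : Prop :=
  ∀ a b : M, (∃ k : ℕ, (k + 1) • a ≤ k • b) → a ≤ b

lemma aux_nsmul_mono {M : Type*} [AddCommMonoid M] [PartialOrder M] [IsOrderedAddMonoid M] (h0 : ∀ x : M, 0 ≤ x)
    {m n : ℕ} (h : m ≤ n) (a : M) : m • a ≤ n • a := by
  have : n • a = m • a + (n - m) • a := by
    rw [← add_nsmul, Nat.add_sub_cancel' h]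
  rw [this]
  exact le_add_of_nonneg_right (by
    calc (0:M) = (n-m) • (0:M) := by simp
    _ ≤ (n-m) • a := nsmul_le_nsmul_right (h0 a) _)

/-- For a positively ordered monoid `M`:
(i) unperforated implies nearly unperforated;
(ii) nearly unperforated implies almost unperforated;
(iii) nearly unperforated implies weakly separative. -/
theorem stmt3 {M : Type*} [AddCommMonoid M] [PartialOrder M] [IsOrderedAddMonoid M] (h0 : ∀ x : M, 0 ≤ x) :
    ((∀ a b : M, ∀ n : ℕ, 1 ≤ n → n • a ≤ n • b → a ≤ b) → NearlyUnperforated M) ∧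
    (NearlyUnperforated M → AlmostUnperforated M) ∧
    (NearlyUnperforated M → ∀ a b : M, 2 • a ≤ a + b → a + b ≤ 2 • b → a ≤ b) := by
  refine ⟨?_, ?_, ?_⟩
  · intro hU a b ⟨k₀, hk⟩
    exact hU a b (max k₀ 1) (le_max_right _ _) (hk _ (le_max_left _ _))
  · intro hN a b ⟨k, hk⟩
    apply hN a b
    refine ⟨k * (k + 1), fun m hm => ?_⟩
    set q := m / (k + 1) with hq
    set r := m % (k + 1) with hr
    have hmod : q * (k + 1) + r = m := by rw [hq, hr, Nat.mul_comm]; exact Nat.div_add_mod m (k+1)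
    have hqk : k ≤ q := by
      rw [hq, Nat.le_div_iff_mul_le (Nat.succ_pos k)]
      exact hm
    have hrk : r ≤ k + 1 := le_of_lt (Nat.mod_lt m (Nat.succ_pos k))
    have hle : (q + 1) * k ≤ m := by nlinarith [hmod, hqk]
    calc m • a = (q * (k+1)) • a + r • a := by rw [← add_nsmul, hmod]
      _ ≤ (q * (k+1)) • a + (k+1) • a := add_le_add_right (aux_nsmul_mono h0 hrk a) _
      _ = ((q + 1) * (k+1)) • a := by rw [← add_nsmul]; ring_nf
      _ = (q + 1) • ((k+1) • a) := mul_smul _ _ _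
      _ ≤ (q + 1) • (k • b) := nsmul_le_nsmul_right hk _
      _ = ((q + 1) * k) • b := (mul_smul _ _ _).symm
      _ ≤ m • b := aux_nsmul_mono h0 hle b
  · intro hN a b h1 h2
    apply hN a b
    refine ⟨2, fun m hm => ?_⟩
    have key : ∀ n : ℕ, (n + 2) • a ≤ a + (n + 1) • b := by
      intro n
      induction n with
      | zero => simpa [two_nsmul] using h1
      | succ n ih =>
        show (n + 2 + 1) • a ≤ a + (n + 1 + 1) • b
        calc (n + 2 + 1) • a = (n + 2) • a + a := succ_nsmul a (n+2)
          _ ≤ (a + (n + 1) • b) + a := add_le_add_left ih a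
          _ = (2 • a) + (n + 1) • b := by rw [two_nsmul]; abel
          _ ≤ (a + b) + (n + 1) • b := add_le_add_left h1 _
          _ = a + (n + 1 + 1) • b := by rw [succ_nsmul b (n+1)]; abel
    obtain ⟨n, rfl⟩ : ∃ n, m = n + 2 := ⟨m - 2, by omega⟩
    calc (n + 2) • a ≤ a + (n + 1) • b := key n
      _ = (a + b) + n • b := by rw [succ_nsmul b n]; abel
      _ ≤ 2 • b + n • b := add_le_add_left h2 _
      _ = (n + 2) • b := by rw [add_nsmul, two_nsmul]; abel
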